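/- There exists a constant C > 0 such that for all finite nonempty sets X, Y and every f : X × Y → {0,1} with r = rank(f) ≥ 1, there exists a nonempty rectangle R ⊆ X × Y with |R| ≥ |X × Y|/(C·r^{3/2}) and bias(f|R) ≥ 1/(C·r^{3/2}). -/

import Mathlib

set_option maxHeartbeats 1000000

open Finset Matrix

/-- The real rank of the 0/1 matrix associated to a boolean function `f : X × Y → {0,1}`. -/
noncomputable def rankOf {X Y : Type*} [Fintype X] [Fintype Y] (f : X → Y → Bool) : ℕ :=
  (Matrix.of (fun x y => if f x y then (1 : ℝ) else 0)).rank

/-- The bias of `f` over the rectangle `A × B`: `|E_{(x,y)∈A×B}[(−1)^{f(x,y)}]|`. -/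
noncomputable def biasOn {X Y : Type*} (f : X → Y → Bool) (A : Finset X) (B : Finset Y) : ℝ :=
  |∑ x ∈ A, ∑ y ∈ B, (if f x y then (-1 : ℝ) else 1)| / (A.card * B.card)

section aux
variable {X Y : Type} [Fintype X] [Fintype Y]

omit [Fintype X] in
/-- rank is subadditive. -/
lemma my_rank_add_le (A B : Matrix X Y ℝ) : (A + B).rank ≤ A.rank + B.rank := by
  classical
  have hr : LinearMap.range (A + B).mulVecLin ≤
      LinearMap.range A.mulVecLin ⊔ LinearMap.range B.mulVecLin := by
    rintro x ⟨v, rfl⟩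
    exact Submodule.mem_sup.2 ⟨A.mulVecLin v, ⟨v, rfl⟩, B.mulVecLin v, ⟨v, rfl⟩, by
      simp [Matrix.mulVecLin_add]⟩
  refine le_trans (Submodule.finrank_mono hr) ?_
  exact Submodule.finrank_add_le_finrank_add_finrank _ _

omit [Fintype X] in
lemma my_rank_smul_le (c : ℝ) (A : Matrix X Y ℝ) : (c • A).rank ≤ A.rank := by
  classical
  have hr : LinearMap.range (c • A).mulVecLin ≤ LinearMap.range A.mulVecLin := by
    rintro x ⟨v, rfl⟩
    exact ⟨c • v, by simp [Matrix.mulVecLin, Matrix.mulVec_smul, Matrix.smul_mulVec]⟩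
  exact Submodule.finrank_mono hr

omit [Fintype X] in
lemma my_rank_ones_le : (Matrix.of (fun (_ : X) (_ : Y) => (1:ℝ))).rank ≤ 1 := by
  classical
  have h : (Matrix.of (fun (_ : X) (_ : Y) => (1:ℝ))) =
      (Matrix.replicateCol Unit (fun _ => (1:ℝ))) * (Matrix.replicateRow Unit (fun _ => (1:ℝ))) := by
    ext x y
    simp [Matrix.mul_apply, Matrix.replicateCol, Matrix.replicateRow]
  rw [h]
  refine le_trans (Matrix.rank_mul_le_left _ _) ?_
  simpa using Matrix.rank_le_card_width (Matrix.replicateCol Unit (fun _ => (1:ℝ)))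

end aux

/-- Key spectral fact: a big eigenvalue with unit eigenvector of `Eᵀ E`. -/
lemma exists_big_eig {X Y : Type} [Fintype X] [Fintype Y] [Nonempty X] [Nonempty Y]
    (E : Matrix X Y ℝ) (hE : ∀ x y, E x y = 1 ∨ E x y = -1) :
    ∃ (lam : ℝ) (v : Y → ℝ),
      (Fintype.card X * Fintype.card Y : ℝ) / E.rank ≤ lam ∧ 1 ≤ (E.rank : ℝ) ∧
      (∑ j, v j ^ 2 = 1) ∧ (Eᵀ * E) *ᵥ v = lam • v := by
  classical
  set B := Eᵀ * E with hBdef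
  have hherm : B.IsHermitian := by
    have := Matrix.isHermitian_conjTranspose_mul_self E
    simpa [Matrix.conjTranspose_eq_transpose_of_trivial] using this
  have hsq : ∀ x y, E x y ^ 2 = 1 := by
    intro x y; rcases hE x y with h | h <;> rw [h] <;> norm_num
  have htrace : B.trace = (Fintype.card X * Fintype.card Y : ℝ) := by
    simp only [hBdef, Matrix.trace, Matrix.diag, Matrix.mul_apply, Matrix.transpose_apply]
    have : ∀ j : Y, ∑ i : X, E i j * E i j = (Fintype.card X : ℝ) := by
      intro j
      have h1 : ∀ i : X, E i j * E i j = 1 := by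
        intro i; nlinarith [hsq i j]
      simp [h1]
    rw [Finset.sum_congr rfl (fun j _ => this j)]
    simp [mul_comm]
  have htr2 : B.trace = ∑ j, hherm.eigenvalues j := by
    simpa using hherm.trace_eq_sum_eigenvalues
  have hrank := hherm.rank_eq_card_non_zero_eigs
  have hrankE : B.rank = E.rank := by
    have := Matrix.rank_transpose_mul_self E
    simpa [hBdef] using this
  set s : Finset Y := Finset.univ.filter (fun j => hherm.eigenvalues j ≠ 0) with hs
  have hcard : s.card = E.rank := by
    rw [← hrankE, hrank, Fintype.card_subtype]
  have hmn : (0:ℝ) < (Fintype.card X * Fintype.card Y : ℝ) := by positivity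
  have hsum : ∑ j ∈ s, hherm.eigenvalues j = (Fintype.card X * Fintype.card Y : ℝ) := by
    rw [hs, Finset.sum_filter_ne_zero, ← htr2, htrace]
  have hne : s.Nonempty := by
    rcases Finset.eq_empty_or_nonempty s with h | h
    · exfalso; rw [h, Finset.sum_empty] at hsum; linarith
    · exact h
  have hrpos : 1 ≤ (E.rank : ℝ) := by
    have h1 : 1 ≤ s.card := Finset.card_pos.mpr hne
    have h2 := hcard ▸ h1
    exact_mod_cast h2
  have hex : ∃ j ∈ s, (Fintype.card X * Fintype.card Y : ℝ) / E.rank ≤ hherm.eigenvalues j := by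
    by_contra hcon
    push_neg at hcon
    have hlt : ∑ j ∈ s, hherm.eigenvalues j <
        ∑ _j ∈ s, (Fintype.card X * Fintype.card Y : ℝ) / E.rank :=
      Finset.sum_lt_sum_of_nonempty hne hcon
    rw [hsum, Finset.sum_const, nsmul_eq_mul, hcard] at hlt
    have hr0 : (E.rank:ℝ) ≠ 0 := by linarith
    rw [mul_div_assoc] at hlt
    have heq : (E.rank:ℝ) * ((Fintype.card X:ℝ) * ((Fintype.card Y:ℝ) / (E.rank:ℝ)))
        = (Fintype.card X:ℝ) * (Fintype.card Y:ℝ) := by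
      field_simp
    linarith
  obtain ⟨j, _, hj⟩ := hex
  refine ⟨hherm.eigenvalues j, hherm.eigenvectorBasis j, hj, hrpos, ?_, ?_⟩
  · have h1 : ‖hherm.eigenvectorBasis j‖ = 1 := hherm.eigenvectorBasis.orthonormal.1 j
    rw [EuclideanSpace.norm_eq] at h1
    have h2 : ∑ i, ‖hherm.eigenvectorBasis j i‖ ^ 2 = 1 := Real.sqrt_eq_one.mp h1
    simpa [Real.norm_eq_abs, sq_abs] using h2
  · exact hherm.mulVec_eigenvectorBasis j


lemma my_cs {ι : Type} [Fintype ι] (f g : ι → ℝ) :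
    |∑ i, f i * g i| ≤ Real.sqrt (∑ i, f i ^ 2) * Real.sqrt (∑ i, g i ^ 2) := by
  have h := Finset.sum_mul_sq_le_sq_mul_sq Finset.univ f g
  have h2 : |∑ i, f i * g i| = Real.sqrt ((∑ i, f i * g i) ^ 2) :=
    (Real.sqrt_sq_eq_abs _).symm
  rw [h2, ← Real.sqrt_mul (by positivity)]
  exact Real.sqrt_le_sqrt h

lemma half_to_quarter {Y : Type} [Fintype Y] (t : Y → ℝ) (c : ℝ)
    (h : c ≤ ∑ j, |t j|) : ∃ B : Finset Y, c / 2 ≤ |∑ j ∈ B, t j| := by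
  classical
  set Bp := Finset.univ.filter (fun j => 0 ≤ t j) with hBp
  set Bm := Finset.univ.filter (fun j => ¬ 0 ≤ t j) with hBm
  have hsplit : ∑ j, |t j| = (∑ j ∈ Bp, t j) + (∑ j ∈ Bm, -t j) := by
    rw [← Finset.sum_filter_add_sum_filter_not Finset.univ (fun j => 0 ≤ t j) (fun j => |t j|)]
    congr 1
    · exact Finset.sum_congr rfl fun j hj => abs_of_nonneg (Finset.mem_filter.mp hj).2
    · exact Finset.sum_congr rfl fun j hj =>
        abs_of_neg (lt_of_not_ge (Finset.mem_filter.mp hj).2)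
  by_cases hc : c / 2 ≤ ∑ j ∈ Bp, t j
  · exact ⟨Bp, le_trans hc (le_abs_self _)⟩
  · refine ⟨Bm, ?_⟩
    have h1 : c / 2 ≤ ∑ j ∈ Bm, -t j := by linarith
    rw [Finset.sum_neg_distrib] at h1
    exact le_trans h1 (neg_le_abs _)


/-- The main rectangle-finding lemma for `±1` matrices. -/
lemma rect_of_eig {X Y : Type} [Fintype X] [Fintype Y] [Nonempty X] [Nonempty Y]
    (E : Matrix X Y ℝ) (hE : ∀ x y, E x y = 1 ∨ E x y = -1)
    (lam : ℝ) (v : Y → ℝ)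
    (hlam : (Fintype.card X * Fintype.card Y : ℝ) / E.rank ≤ lam)
    (hr1 : 1 ≤ (E.rank : ℝ))
    (hv : ∑ j, v j ^ 2 = 1)
    (heig : (Eᵀ * E) *ᵥ v = lam • v) :
    ∃ (A : Finset X) (B : Finset Y),
      (Fintype.card X * Fintype.card Y : ℝ) / (4 * E.rank * Real.sqrt E.rank)
        ≤ |∑ x ∈ A, ∑ y ∈ B, E x y| := by
  classical
  set m := (Fintype.card X : ℝ) with hmdef
  set n := (Fintype.card Y : ℝ) with hndef
  set ρ := (E.rank : ℝ) with hρdef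
  have hm : 0 < m := by
    simp only [hmdef, Nat.cast_pos]; exact Fintype.card_pos
  have hn : 0 < n := by
    simp only [hndef, Nat.cast_pos]; exact Fintype.card_pos
  have hρ : 0 < ρ := lt_of_lt_of_le one_pos hr1
  have hlam0 : 0 < lam := lt_of_lt_of_le (by positivity) hlam
  have hsq : ∀ x y, E x y ^ 2 = 1 := by
    intro x y; rcases hE x y with h | h <;> rw [h] <;> norm_num
  set w : X → ℝ := fun i => ∑ j, E i j * v j with hw
  -- pointwise eigen equation
  have heig' : ∀ j, ∑ i, E i j * w i = lam * v j := by
    intro j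
    have h := congrFun heig j
    simp only [Matrix.mulVec, dotProduct, Matrix.mul_apply, Matrix.transpose_apply,
      Pi.smul_apply, smul_eq_mul] at h
    calc ∑ i, E i j * w i = ∑ i, ∑ k, E i j * (E i k * v k) := by
          simp only [hw, Finset.mul_sum]
      _ = ∑ k, ∑ i, E i j * (E i k * v k) := Finset.sum_comm
      _ = ∑ k, (∑ i, E i j * E i k) * v k := by
          refine Finset.sum_congr rfl fun k _ => ?_
          rw [Finset.sum_mul]
          simp [mul_assoc]
      _ = lam * v j := h
  -- norm of w
  have hw2 : ∑ i, w i ^ 2 = lam := by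
    calc ∑ i, w i ^ 2 = ∑ i, ∑ j, (E i j * v j) * w i := by
          refine Finset.sum_congr rfl fun i _ => ?_
          rw [sq, ← Finset.sum_mul]
      _ = ∑ j, ∑ i, (E i j * v j) * w i := Finset.sum_comm
      _ = ∑ j, v j * (∑ i, E i j * w i) := by
          refine Finset.sum_congr rfl fun j _ => ?_
          rw [Finset.mul_sum]
          refine Finset.sum_congr rfl fun i _ => by ring
      _ = ∑ j, v j * (lam * v j) := by
          refine Finset.sum_congr rfl fun j _ => by rw [heig']
      _ = lam * ∑ j, v j ^ 2 := by
          rw [Finset.mul_sum]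
          refine Finset.sum_congr rfl fun j _ => by ring
      _ = lam := by rw [hv, mul_one]
  -- sup-norm bounds
  have hrowsq : ∀ i, ∑ j, E i j ^ 2 = n := by
    intro i; simp [hsq, hndef]
  have hcolsq : ∀ j, ∑ i, E i j ^ 2 = m := by
    intro j; simp [hsq, hmdef]
  have hwinf : ∀ i, |w i| ≤ Real.sqrt n := by
    intro i
    have := my_cs (fun j => E i j) v
    rw [hrowsq i, hv, Real.sqrt_one, mul_one] at this
    exact this
  have hvinf : ∀ j, lam * |v j| ≤ Real.sqrt m * Real.sqrt lam := by
    intro j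
    have := my_cs (fun i => E i j) w
    rw [hcolsq j, hw2, heig' j] at this
    calc lam * |v j| = |lam * v j| := by
          rw [abs_mul, abs_of_pos hlam0]
      _ ≤ Real.sqrt m * Real.sqrt lam := this
  -- ℓ¹ norm of w is big
  have hl1 : lam ≤ Real.sqrt n * ∑ i, |w i| := by
    have : ∀ i, w i ^ 2 ≤ Real.sqrt n * |w i| := by
      intro i
      calc w i ^ 2 = |w i| * |w i| := by rw [← abs_mul, ← sq, abs_of_nonneg (sq_nonneg _)]
        _ ≤ Real.sqrt n * |w i| := mul_le_mul_of_nonneg_right (hwinf i) (abs_nonneg _)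
    calc lam = ∑ i, w i ^ 2 := hw2.symm
      _ ≤ ∑ i, Real.sqrt n * |w i| := Finset.sum_le_sum fun i _ => this i
      _ = Real.sqrt n * ∑ i, |w i| := by rw [Finset.mul_sum]
  -- sign vector and d
  set x : X → ℝ := fun i => if 0 ≤ w i then 1 else -1 with hx
  have hxw : ∀ i, x i * w i = |w i| := by
    intro i
    by_cases h : 0 ≤ w i
    · simp [hx, h, abs_of_nonneg h]
    · simp [hx, h, abs_of_neg (lt_of_not_ge h)]
  set d : Y → ℝ := fun j => ∑ i, x i * E i j with hd
  have hdv : ∑ j, d j * v j = ∑ i, |w i| := by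
    calc ∑ j, d j * v j = ∑ j, ∑ i, (x i * E i j) * v j := by
          refine Finset.sum_congr rfl fun j _ => ?_
          rw [hd, Finset.sum_mul]
      _ = ∑ i, ∑ j, (x i * E i j) * v j := Finset.sum_comm
      _ = ∑ i, x i * w i := by
          refine Finset.sum_congr rfl fun i _ => ?_
          rw [hw, Finset.mul_sum]
          refine Finset.sum_congr rfl fun j _ => by ring
      _ = ∑ i, |w i| := Finset.sum_congr rfl fun i _ => hxw i
  -- lower bound for ∑ |d j|
  set T := lam * Real.sqrt lam / (Real.sqrt m * Real.sqrt n) with hT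
  have hsd : T ≤ ∑ j, |d j| := by
    have h1 : ∑ j, d j * v j ≤ (Real.sqrt m * Real.sqrt lam / lam) * ∑ j, |d j| := by
      rw [Finset.mul_sum]
      refine Finset.sum_le_sum fun j _ => ?_
      calc d j * v j ≤ |d j * v j| := le_abs_self _
        _ = |d j| * |v j| := abs_mul _ _
        _ ≤ |d j| * (Real.sqrt m * Real.sqrt lam / lam) := by
            refine mul_le_mul_of_nonneg_left ?_ (abs_nonneg _)
            rw [le_div_iff₀ hlam0, mul_comm]
            exact hvinf j
        _ = Real.sqrt m * Real.sqrt lam / lam * |d j| := by ring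
    have h2 : lam ≤ Real.sqrt n * ((Real.sqrt m * Real.sqrt lam / lam) * ∑ j, |d j|) := by
      calc lam ≤ Real.sqrt n * ∑ i, |w i| := hl1
        _ = Real.sqrt n * ∑ j, d j * v j := by rw [hdv]
        _ ≤ Real.sqrt n * ((Real.sqrt m * Real.sqrt lam / lam) * ∑ j, |d j|) := by
            refine mul_le_mul_of_nonneg_left h1 (Real.sqrt_nonneg _)
    rw [hT, div_le_iff₀ (by positivity)]
    have hsl : Real.sqrt lam ^ 2 = lam := Real.sq_sqrt hlam0.le
    have hslpos : 0 < Real.sqrt lam := Real.sqrt_pos.mpr hlam0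
    have hsd0 : 0 ≤ ∑ j, |d j| := Finset.sum_nonneg fun j _ => abs_nonneg _
    have hmpos : 0 < Real.sqrt m := Real.sqrt_pos.mpr hm
    have hnpos : 0 < Real.sqrt n := Real.sqrt_pos.mpr hn
    -- from h2 : lam ≤ √n * (√m √lam / lam * S), conclude lam √lam ≤ S * (√m √n)
    have h3 : lam * lam ≤ √n * (√m * √lam) * ∑ j, |d j| := by
      calc lam * lam ≤ lam * (√n * (√m * √lam / lam * ∑ j, |d j|)) :=
            mul_le_mul_of_nonneg_left h2 hlam0.le
        _ = √n * (√m * √lam) * ∑ j, |d j| := by field_simp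
    have h5 : (lam * √lam) * √lam ≤ ((∑ j, |d j|) * (√m * √n)) * √lam := by
      calc (lam * √lam) * √lam = lam * lam := by rw [mul_assoc, ← sq, hsl]
        _ ≤ √n * (√m * √lam) * ∑ j, |d j| := h3
        _ = ((∑ j, |d j|) * (√m * √n)) * √lam := by ring
    exact le_of_mul_le_mul_right h5 hslpos
  -- lower bound for T
  have hTlow : m * n / (ρ * Real.sqrt ρ) ≤ T := by
    have h1 : m * n ≤ lam * ρ := by
      rw [div_le_iff₀ hρ] at hlam; linarith [hlam]
    have hmn0 : (0:ℝ) ≤ m * n := by positivity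
    have h2 : m * n * Real.sqrt (m * n) ≤ (lam * ρ) * Real.sqrt (lam * ρ) :=
      mul_le_mul h1 (Real.sqrt_le_sqrt h1) (Real.sqrt_nonneg _) (by positivity)
    rw [Real.sqrt_mul hm.le, Real.sqrt_mul hlam0.le] at h2
    rw [hT, div_le_div_iff₀ (by positivity) (by positivity)]
    calc m * n * (Real.sqrt m * Real.sqrt n)
        = m * n * (Real.sqrt m * Real.sqrt n) := rfl
      _ ≤ lam * ρ * (Real.sqrt lam * Real.sqrt ρ) := by nlinarith [h2]
      _ = lam * Real.sqrt lam * (ρ * Real.sqrt ρ) := by ring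

  -- split rows by sign
  set P := Finset.univ.filter (fun i => 0 ≤ w i) with hP
  set Nn := Finset.univ.filter (fun i => ¬ 0 ≤ w i) with hNn
  have hdsplit : ∀ j, d j = (∑ i ∈ P, E i j) - (∑ i ∈ Nn, E i j) := by
    intro j
    have hdj : d j = ∑ i, x i * E i j := rfl
    have h0 : ∑ i, x i * E i j
        = (∑ i ∈ P, x i * E i j) + (∑ i ∈ Nn, x i * E i j) :=
      (Finset.sum_filter_add_sum_filter_not Finset.univ _ _).symm
    have h1 : ∑ i ∈ P, x i * E i j = ∑ i ∈ P, E i j :=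
      Finset.sum_congr rfl fun i hi => by
        simp [hx, (Finset.mem_filter.mp hi).2]
    have h2 : ∑ i ∈ Nn, x i * E i j = ∑ i ∈ Nn, -(E i j) :=
      Finset.sum_congr rfl fun i hi => by
        simp [hx, (Finset.mem_filter.mp hi).2]
    rw [hdj, h0, h1, h2, Finset.sum_neg_distrib]
    ring
  have habs : ∑ j, |d j| ≤ (∑ j, |∑ i ∈ P, E i j|) + ∑ j, |∑ i ∈ Nn, E i j| := by
    rw [← Finset.sum_add_distrib]
    refine Finset.sum_le_sum fun j _ => ?_
    rw [hdsplit j]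
    exact abs_sub _ _
  obtain ⟨A, hA⟩ : ∃ A : Finset X, T / 2 ≤ ∑ j, |∑ i ∈ A, E i j| := by
    by_cases hc : T / 2 ≤ ∑ j, |∑ i ∈ P, E i j|
    · exact ⟨P, hc⟩
    · refine ⟨Nn, ?_⟩
      push_neg at hc
      linarith [hsd, habs]
  obtain ⟨Bf, hB⟩ := half_to_quarter (fun j => ∑ i ∈ A, E i j) (T / 2) hA
  refine ⟨A, Bf, ?_⟩
  have hswap : ∑ x ∈ A, ∑ y ∈ Bf, E x y = ∑ j ∈ Bf, ∑ i ∈ A, E i j := Finset.sum_comm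
  rw [hswap]
  have h4 : m * n / (4 * ρ * Real.sqrt ρ) = (m * n / (ρ * Real.sqrt ρ)) / 4 := by
    rw [div_div]
    ring_nf
  rw [h4]
  
  linarith [hTlow, hB]

/-- Nisan–Wigderson: there is `C > 0` so that every boolean function of rank `r ≥ 1` has a
nonempty rectangle `R` of size `|R| ≥ |X × Y|/(C·r^{3/2})` with `bias(f|R) ≥ 1/(C·r^{3/2})`. -/
theorem low_rank_has_biased_rectangle :
    ∃ C : ℝ, 0 < C ∧
      ∀ (X Y : Type) [Fintype X] [Fintype Y] [Nonempty X] [Nonempty Y]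
        (f : X → Y → Bool), 1 ≤ rankOf f →
        ∃ (A : Finset X) (B : Finset Y), A.Nonempty ∧ B.Nonempty ∧
          (Fintype.card X * Fintype.card Y : ℝ) / (C * (rankOf f : ℝ) ^ ((3 : ℝ) / 2)) ≤
            (A.card * B.card : ℝ) ∧
          1 / (C * (rankOf f : ℝ) ^ ((3 : ℝ) / 2)) ≤ biasOn f A B := by
  classical
  refine ⟨12, by norm_num, ?_⟩
  intro X Y _ _ _ _ f hr
  set E : Matrix X Y ℝ := Matrix.of (fun x y => if f x y then (-1:ℝ) else 1) with hEdef
  have hE : ∀ x y, E x y = 1 ∨ E x y = -1 := by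
    intro x y
    by_cases h : f x y
    · right; simp [hEdef, h]
    · left; simp [hEdef, h]
  set M : Matrix X Y ℝ := Matrix.of (fun x y => if f x y then (1:ℝ) else 0) with hMdef
  have hsplit : E = Matrix.of (fun (_:X) (_:Y) => (1:ℝ)) + (-2 : ℝ) • M := by
    ext x y
    by_cases h : f x y <;> simp [hEdef, hMdef, h] <;> norm_num
  have hrankE : E.rank ≤ 1 + rankOf f := by
    rw [hsplit]
    refine le_trans (my_rank_add_le _ _) ?_
    exact add_le_add my_rank_ones_le (my_rank_smul_le _ _)
  set r := (rankOf f : ℝ) with hrdef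
  have hr1 : (1:ℝ) ≤ r := by rw [hrdef]; exact_mod_cast hr
  have hρr : (E.rank : ℝ) ≤ 2 * r := by
    have h1 : (E.rank : ℝ) ≤ 1 + r := by rw [hrdef]; exact_mod_cast hrankE
    linarith
  obtain ⟨lam, v, hlam, hrE1, hv, heig⟩ := exists_big_eig E hE
  obtain ⟨A, B, hAB⟩ := rect_of_eig E hE lam v hlam hrE1 hv heig
  set m := (Fintype.card X : ℝ) with hmdef
  set n := (Fintype.card Y : ℝ) with hndef
  have hm : 0 < m := by simp only [hmdef, Nat.cast_pos]; exact Fintype.card_pos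
  have hn : 0 < n := by simp only [hndef, Nat.cast_pos]; exact Fintype.card_pos
  -- comparison of denominators
  have hpow : r ^ ((3:ℝ)/2) = r * Real.sqrt r := by
    rw [show (3:ℝ)/2 = 1 + 1/2 by norm_num, Real.rpow_add (by linarith), Real.rpow_one,
      ← Real.sqrt_eq_rpow]
  have hsqrt2 : Real.sqrt 2 ≤ 3/2 := by
    nlinarith [Real.sq_sqrt (show (0:ℝ) ≤ 2 by norm_num), Real.sqrt_nonneg 2]
  have hcomp : 4 * (E.rank : ℝ) * Real.sqrt (E.rank) ≤ 12 * r ^ ((3:ℝ)/2) := by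
    rw [hpow]
    have h1 : Real.sqrt (E.rank : ℝ) ≤ Real.sqrt 2 * Real.sqrt r := by
      rw [← Real.sqrt_mul (by norm_num : (0:ℝ) ≤ 2)]
      exact Real.sqrt_le_sqrt hρr
    have hsr : 0 ≤ Real.sqrt r := Real.sqrt_nonneg r
    have h2 : Real.sqrt (E.rank : ℝ) ≤ (3/2) * Real.sqrt r := by
      refine le_trans h1 ?_
      exact mul_le_mul_of_nonneg_right hsqrt2 hsr
    have hρ0 : (0:ℝ) ≤ (E.rank : ℝ) := by positivity
    calc 4 * (E.rank : ℝ) * Real.sqrt (E.rank)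
        ≤ 4 * (2 * r) * ((3/2) * Real.sqrt r) := by
          refine mul_le_mul (by linarith) h2 (Real.sqrt_nonneg _) (by linarith)
      _ = 12 * (r * Real.sqrt r) := by ring
  have hpowpos : 0 < 12 * r ^ ((3:ℝ)/2) := by
    rw [hpow]
    have : 0 < Real.sqrt r := Real.sqrt_pos.mpr (by linarith)
    nlinarith
  have hdenpos : 0 < 4 * (E.rank : ℝ) * Real.sqrt (E.rank) := by
    have : 0 < Real.sqrt (E.rank : ℝ) := Real.sqrt_pos.mpr (by linarith)
    nlinarith
  -- the bilinear sum
  set S := ∑ x ∈ A, ∑ y ∈ B, E x y with hSdef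
  have hfinal : m * n / (12 * r ^ ((3:ℝ)/2)) ≤ |S| := by
    refine le_trans ?_ hAB
    exact div_le_div_of_nonneg_left (by positivity) hdenpos hcomp
  have hSpos : 0 < |S| := lt_of_lt_of_le (by positivity) hfinal
  have hAne : A.Nonempty := by
    rcases Finset.eq_empty_or_nonempty A with h | h
    · exfalso; rw [hSdef, h, Finset.sum_empty, abs_zero] at hSpos; exact lt_irrefl _ hSpos
    · exact h
  have hBne : B.Nonempty := by
    rcases Finset.eq_empty_or_nonempty B with h | h
    · exfalso
      have : S = 0 := by
        rw [hSdef, h]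
        simp
      rw [this, abs_zero] at hSpos; exact lt_irrefl _ hSpos
    · exact h
  have habs1 : ∀ x y, |E x y| = 1 := by
    intro x y; rcases hE x y with h | h <;> rw [h] <;> norm_num
  have hsize : |S| ≤ (A.card : ℝ) * B.card := by
    calc |S| ≤ ∑ x ∈ A, |∑ y ∈ B, E x y| := Finset.abs_sum_le_sum_abs _ _
      _ ≤ ∑ x ∈ A, ∑ y ∈ B, |E x y| :=
          Finset.sum_le_sum fun x _ => Finset.abs_sum_le_sum_abs _ _
      _ = ∑ x ∈ A, ∑ y ∈ B, (1:ℝ) := by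
          refine Finset.sum_congr rfl fun x _ => Finset.sum_congr rfl fun y _ => habs1 x y
      _ = (A.card : ℝ) * B.card := by simp [mul_comm]
  have hABpos : (0:ℝ) < (A.card : ℝ) * B.card := by
    have hA0 : 0 < A.card := Finset.card_pos.mpr hAne
    have hB0 : 0 < B.card := Finset.card_pos.mpr hBne
    positivity
  have hABle : (A.card : ℝ) * B.card ≤ m * n := by
    have h1 : (A.card : ℝ) ≤ m := by
      rw [hmdef]; exact_mod_cast Finset.card_le_univ A
    have h2 : (B.card : ℝ) ≤ n := by
      rw [hndef]; exact_mod_cast Finset.card_le_univ B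
    have : (0:ℝ) ≤ (A.card:ℝ) := by positivity
    nlinarith
  refine ⟨A, B, hAne, hBne, ?_, ?_⟩
  · exact le_trans (le_trans hfinal hsize) (le_refl _)
  · -- bias bound
    have hbias : biasOn f A B = |S| / ((A.card : ℝ) * B.card) := by
      rw [biasOn, hSdef]
      rfl
    rw [hbias, le_div_iff₀ hABpos]
    calc 1 / (12 * r ^ ((3:ℝ)/2)) * ((A.card : ℝ) * B.card)
        ≤ 1 / (12 * r ^ ((3:ℝ)/2)) * (m * n) := by
          refine mul_le_mul_of_nonneg_left hABle (by positivity)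
      _ = m * n / (12 * r ^ ((3:ℝ)/2)) := by ring
      _ ≤ |S| := hfinal
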